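/- Let p* be the unique minimizer of f(p) = Σ_{i=1}^n f_i(p_i) subject to 1_n^⊤ p = c, and let p ∈ ℝ^n satisfy 1_n^⊤ p = c. Then λ_2 ω ‖p − p*‖ ≤ ‖L ∇f(p)‖, where ω = min_i ω_i. Consequently, if p^+ = p − η L ∇f(p) for some η > 0 and |p_i^+ − p_i| ≤ Δ η λ_2 ω / √n for all i, then ‖p − p*‖ ≤ Δ. -/

import Mathlib

open Matrix

set_option maxHeartbeats 1000000

/-- Strong monotonicity of a function whose derivative is bounded below. -/
lemma discrn_strong_mono (g : ℝ → ℝ) (hg : Differentiable ℝ g) (ω : ℝ)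
    (hlb : ∀ s, ω ≤ deriv g s) (a b : ℝ) :
    ω * (a - b) ^ 2 ≤ (g a - g b) * (a - b) := by
  have key : ∀ x y : ℝ, x < y → ω * (y - x) ≤ g y - g x := by
    intro x y hxy
    obtain ⟨ξ, -, hξ⟩ := exists_deriv_eq_slope g hxy hg.continuous.continuousOn
      hg.differentiableOn
    have h1 : ω ≤ (g y - g x) / (y - x) := hξ ▸ hlb ξ
    have h2 : 0 < y - x := by linarith
    rw [le_div_iff₀ h2] at h1
    linarith
  rcases lt_trichotomy a b with h | h | h
  · have := key a b h; nlinarith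
  · simp [h]
  · have := key b a h; nlinarith

/-- Stationarity at the constrained minimizer: all marginal costs are equal. -/
lemma discrn_stationary (n : ℕ) (f : Fin n → ℝ → ℝ) (hf1 : ∀ i, Differentiable ℝ (f i))
    (c : ℝ) (pstar : Fin n → ℝ) (hfeas : ∑ i, pstar i = c)
    (hmin : ∀ w : Fin n → ℝ, ∑ i, w i = c → ∑ i, f i (pstar i) ≤ ∑ i, f i (w i))
    (i j : Fin n) : deriv (f i) (pstar i) = deriv (f j) (pstar j) := by
  rcases eq_or_ne i j with rfl | hij
  · rfl
  set d : Fin n → ℝ := fun k => (if k = i then (1:ℝ) else 0) - (if k = j then 1 else 0) with hd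
  have hdsum : ∑ k, d k = 0 := by
    simp [hd, Finset.sum_sub_distrib]
  set φ : ℝ → ℝ := fun t => ∑ k, f k (pstar k + t * d k) with hφdef
  have hφ : ∀ t, HasDerivAt φ (∑ k, deriv (f k) (pstar k + t * d k) * d k) t := by
    intro t
    apply HasDerivAt.fun_sum
    intro k _
    have h1 : HasDerivAt (fun t : ℝ => pstar k + t * d k) (d k) t := by
      simpa using ((hasDerivAt_id t).mul_const (d k)).const_add (pstar k)
    exact (((hf1 k) (pstar k + t * d k)).hasDerivAt).comp t h1
  have hlocal : IsLocalMin φ 0 := by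
    apply Filter.Eventually.of_forall
    intro t
    have hsum : ∑ k, (pstar k + t * d k) = c := by
      rw [Finset.sum_add_distrib, hfeas, ← Finset.mul_sum, hdsum, mul_zero, add_zero]
    have := hmin (fun k => pstar k + t * d k) hsum
    simpa [hφdef] using this
  have hzero := hlocal.hasDerivAt_eq_zero (hφ 0)
  have hsum0 : ∑ k, deriv (f k) (pstar k) * d k
      = deriv (f i) (pstar i) - deriv (f j) (pstar j) := by
    simp only [hd, mul_sub, Finset.sum_sub_distrib, mul_ite, mul_one, mul_zero]
    rw [Finset.sum_ite_eq' Finset.univ i (fun k => deriv (f k) (pstar k)),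
        Finset.sum_ite_eq' Finset.univ j (fun k => deriv (f k) (pstar k))]
    simp
  simp only [zero_mul, add_zero] at hzero
  rw [hsum0] at hzero
  linarith

/-- **Locally checkable stopping criterion for the inner-loop solver** (key step in
the proof of the Convergence of DiSCRN theorem): for any feasible `p`,
`λ₂ ω ‖p - p*‖ ≤ ‖L ∇f(p)‖`; consequently, if the Laplacian-gradient step
`p⁺ = p - η L ∇f(p)` satisfies the componentwise stopping criterion
`|pᵢ⁺ - pᵢ| ≤ Δ η λ₂ ω / √n`, then `‖p - p*‖ ≤ Δ`. -/
theorem discrn_stopping_criterion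
    (n : ℕ) (hn : 2 ≤ n)
    (L : Matrix (Fin n) (Fin n) ℝ)
    (hLsymm : L.IsSymm) (hLpsd : L.PosSemidef)
    (hL1 : L *ᵥ (fun _ => (1 : ℝ)) = 0)
    (hLker : ∀ v : Fin n → ℝ, L *ᵥ v = 0 → ∃ c : ℝ, v = fun _ => c)
    -- λ₂ : the smallest nonzero (Fiedler) eigenvalue of L
    (lam2 : ℝ) (hlam2_pos : 0 < lam2)
    (hlam2_eig : ∃ v : Fin n → ℝ, v ≠ 0 ∧ (∑ i, v i) = 0 ∧ L *ᵥ v = lam2 • v)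
    (hlam2_min : ∀ v : Fin n → ℝ, (∑ i, v i) = 0 → lam2 * (v ⬝ᵥ v) ≤ v ⬝ᵥ (L *ᵥ v))
    -- costs: twice differentiable with 0 < ω ≤ f_i''
    (f : Fin n → ℝ → ℝ)
    (hf1 : ∀ i, Differentiable ℝ (f i))
    (hf2 : ∀ i, Differentiable ℝ (deriv (f i)))
    (ω : ℝ) (hω : 0 < ω)
    (hω_lb : ∀ i s, ω ≤ deriv (deriv (f i)) s)
    (F : (Fin n → ℝ) → ℝ) (hF : F = fun p => ∑ i, f i (p i))
    (gradF : (Fin n → ℝ) → (Fin n → ℝ))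
    (hgradF : gradF = fun p i => deriv (f i) (p i))
    -- p* : the unique minimizer of F subject to 1ᵀ p = c
    (c : ℝ) (pstar : Fin n → ℝ)
    (hpstar_feas : ∑ i, pstar i = c)
    (hpstar_min : ∀ w : Fin n → ℝ, ∑ i, w i = c → F pstar ≤ F w)
    (hpstar_uniq : ∀ w : Fin n → ℝ, ∑ i, w i = c →
      (∀ u : Fin n → ℝ, ∑ i, u i = c → F w ≤ F u) → w = pstar)
    -- a feasible point p
    (p : Fin n → ℝ) (hp : ∑ i, p i = c)
    (Δ : ℝ) (hΔ : 0 < Δ) :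
    lam2 * ω * Real.sqrt (∑ i, (p i - pstar i) ^ 2) ≤
      Real.sqrt (∑ i, ((L *ᵥ gradF p) i) ^ 2) ∧
    (∀ η : ℝ, 0 < η →
      ∀ pplus : Fin n → ℝ, pplus = p - η • (L *ᵥ gradF p) →
        (∀ i, |pplus i - p i| ≤ Δ * η * lam2 * ω / Real.sqrt n) →
        Real.sqrt (∑ i, (p i - pstar i) ^ 2) ≤ Δ) := by
  subst hF hgradF
  beta_reduce
  have hn0 : (0:ℝ) < n := by positivity
  set g : Fin n → ℝ := fun i => deriv (f i) (p i) with hgdef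
  have hxsum : ∑ i, (p i - pstar i) = 0 := by
    simp [Finset.sum_sub_distrib, hp, hpstar_feas]
  -- stationarity : all marginal costs at pstar are equal
  have i0 : Fin n := ⟨0, by omega⟩
  set μ : ℝ := deriv (f i0) (pstar i0) with hμdef
  have hμ : ∀ i, deriv (f i) (pstar i) = μ :=
    fun i => discrn_stationary n f hf1 c pstar hpstar_feas (by simpa using hpstar_min) i i0
  -- centered gradient
  set m : ℝ := (∑ i, g i) / n with hmdef
  set g0 : Fin n → ℝ := fun i => g i - m with hg0def
  have hg0sum : ∑ i, g0 i = 0 := by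
    simp only [hg0def, Finset.sum_sub_distrib, Finset.sum_const, Finset.card_univ,
      Fintype.card_fin, nsmul_eq_mul, hmdef]
    field_simp
    ring
  have hLg0 : L *ᵥ g0 = L *ᵥ g := by
    have hrw : g0 = g - m • (fun _ => (1:ℝ)) := by
      funext i; simp [hg0def]
    rw [hrw, Matrix.mulVec_sub, Matrix.mulVec_smul, hL1, smul_zero, sub_zero]
  -- norms
  set X : ℝ := Real.sqrt (∑ i, (p i - pstar i) ^ 2) with hXdef
  set G : ℝ := Real.sqrt (∑ i, g0 i ^ 2) with hGdef
  set M : ℝ := Real.sqrt (∑ i, ((L *ᵥ g) i) ^ 2) with hMdef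
  have hXnn : 0 ≤ X := Real.sqrt_nonneg _
  have hGnn : 0 ≤ G := Real.sqrt_nonneg _
  have hMnn : 0 ≤ M := Real.sqrt_nonneg _
  have hXsq : X ^ 2 = ∑ i, (p i - pstar i) ^ 2 := Real.sq_sqrt (by positivity)
  have hGsq : G ^ 2 = ∑ i, g0 i ^ 2 := Real.sq_sqrt (by positivity)
  -- ⟨p - p*, g0⟩ ≥ ω ‖p - p*‖²
  have hxg : ω * (∑ i, (p i - pstar i) ^ 2) ≤ ∑ i, (p i - pstar i) * g0 i := by
    have heach : ∀ i, (p i - pstar i) * g0 i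
        = (deriv (f i) (p i) - deriv (f i) (pstar i)) * (p i - pstar i)
          + μ * (p i - pstar i) - m * (p i - pstar i) := by
      intro i
      rw [hμ i]
      simp only [hg0def, hgdef]
      ring
    rw [Finset.sum_congr rfl fun i _ => heach i]
    rw [Finset.sum_sub_distrib, Finset.sum_add_distrib, ← Finset.mul_sum, ← Finset.mul_sum,
      hxsum, mul_zero, mul_zero, add_zero, sub_zero, Finset.mul_sum]
    apply Finset.sum_le_sum
    intro i _
    exact discrn_strong_mono (deriv (f i)) (hf2 i) ω (hω_lb i) (p i) (pstar i)
  -- Cauchy–Schwarz steps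
  have hcs1 : ∑ i, (p i - pstar i) * g0 i ≤ X * G :=
    Real.sum_mul_le_sqrt_mul_sqrt _ (fun i => p i - pstar i) g0
  have hdot : lam2 * (∑ i, g0 i ^ 2) ≤ ∑ i, g0 i * ((L *ᵥ g) i) := by
    have h := hlam2_min g0 hg0sum
    rw [hLg0] at h
    simpa [dotProduct, sq] using h
  have hcs2 : ∑ i, g0 i * ((L *ᵥ g) i) ≤ G * M :=
    Real.sum_mul_le_sqrt_mul_sqrt _ g0 (fun i => (L *ᵥ g) i)
  -- Part 1
  have part1 : lam2 * ω * X ≤ M := by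
    rcases eq_or_lt_of_le hXnn with hX | hX
    · rw [← hX, mul_zero]; exact hMnn
    · have hωX : ω * X ≤ G := by
        have h := le_trans hxg hcs1
        rw [← hXsq] at h
        nlinarith
      have hG : 0 < G := lt_of_lt_of_le (by positivity) hωX
      have hlG : lam2 * G ≤ M := by
        have h := le_trans hdot hcs2
        rw [← hGsq] at h
        nlinarith
      nlinarith
  refine ⟨part1, ?_⟩
  intro η hη pplus hpp hstop
  have hMle : M ≤ Δ * lam2 * ω := by
    have hsn : (0:ℝ) < Real.sqrt n := Real.sqrt_pos.2 hn0
    have hsq : Real.sqrt n ^ 2 = (n:ℝ) := Real.sq_sqrt hn0.le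
    have hbound : ∀ i, ((L *ᵥ g) i) ^ 2 ≤ (Δ * lam2 * ω) ^ 2 / n := by
      intro i
      have h := hstop i
      have he : pplus i - p i = -(η * (L *ᵥ g) i) := by
        rw [hpp]; simp only [Pi.sub_apply, Pi.smul_apply, smul_eq_mul]; ring
      rw [he, abs_neg, abs_mul, abs_of_pos hη, le_div_iff₀ hsn] at h
      have ha : |(L *ᵥ g) i| * Real.sqrt n ≤ Δ * lam2 * ω := by
        nlinarith [abs_nonneg ((L *ᵥ g) i)]
      rw [le_div_iff₀ hn0]
      nlinarith [abs_nonneg ((L *ᵥ g) i), sq_abs ((L *ᵥ g) i),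
        mul_nonneg (abs_nonneg ((L *ᵥ g) i)) hsn.le]
    have hsum : ∑ i, ((L *ᵥ g) i) ^ 2 ≤ (Δ * lam2 * ω) ^ 2 := by
      calc ∑ i, ((L *ᵥ g) i) ^ 2 ≤ ∑ _i : Fin n, (Δ * lam2 * ω) ^ 2 / n :=
            Finset.sum_le_sum fun i _ => hbound i
        _ = n * ((Δ * lam2 * ω) ^ 2 / n) := by
            rw [Finset.sum_const, Finset.card_univ, Fintype.card_fin, nsmul_eq_mul]
        _ = (Δ * lam2 * ω) ^ 2 := by field_simp
    rw [hMdef]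
    calc Real.sqrt (∑ i, ((L *ᵥ g) i) ^ 2) ≤ Real.sqrt ((Δ * lam2 * ω) ^ 2) :=
          Real.sqrt_le_sqrt hsum
      _ = Δ * lam2 * ω := Real.sqrt_sq (by positivity)
  nlinarith [part1, hMle, mul_pos hlam2_pos hω]
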